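/- Let T : K → H be a relative Rota-Baxter operator with respect to a cocommutative H-module bialgebra (K, ⇀) and let L(K) = P(K), L(H) = P(H) denote the Lie algebras of primitive elements. Then T restricts to a map P(K) → P(H) which is a relative Rota-Baxter operator of weight 1 on the Lie algebra P(H): [T(a), T(b)] = T(T(a) ⇀ b − T(b) ⇀ a + [a,b]) for all primitive a, b ∈ K. -/

import Mathlib

/-!
Relative Rota–Baxter operators on Hopf algebras (Li–Sheng–Tang).
`K` is a left `H`-module bialgebra via `act : H ⊗ K →ₗ K`, and
`T : K →ₗ H` is a coalgebra homomorphism satisfying the relative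
Rota–Baxter identity `T(a)·T(b) = T(a₁·(T(a₂) ⇀ b))`.
Sweedler sums are expressed by applying linear maps to `Coalgebra.comul`.
-/

open TensorProduct Coalgebra LinearMap HopfAlgebra

variable (R H K : Type*) [CommRing R] [Ring H] [HopfAlgebra R H]
  [Ring K] [HopfAlgebra R K]

/-- Cocommutativity of a coalgebra. -/
def IsCocomm (A : Type*) [AddCommGroup A] [Module R A] [Coalgebra R A] : Prop :=
  ∀ x : A, (TensorProduct.comm R A A) (Coalgebra.comul x) = Coalgebra.comul x

/-- `K` is a left `H`-module bialgebra via `act`: a module, a module algebra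
and a module coalgebra. -/
structure IsModuleBialgebra (act : H ⊗[R] K →ₗ[R] K) : Prop where
  /-- `1 ⇀ a = a` -/
  one_act : ∀ a : K, act ((1 : H) ⊗ₜ a) = a
  /-- `(x·y) ⇀ a = x ⇀ (y ⇀ a)` -/
  mul_act : ∀ (x y : H) (a : K), act ((x * y) ⊗ₜ a) = act (x ⊗ₜ act (y ⊗ₜ a))
  /-- `x ⇀ (a·b) = (x₁ ⇀ a)·(x₂ ⇀ b)` -/
  act_mul : ∀ (x : H) (a b : K),
    act (x ⊗ₜ (a * b))
      = LinearMap.mul' R K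
          (TensorProduct.map (act ∘ₗ (TensorProduct.mk R H K).flip a)
            (act ∘ₗ (TensorProduct.mk R H K).flip b) (Coalgebra.comul x))
  /-- `x ⇀ 1 = ε(x)·1` -/
  act_one : ∀ x : H, act (x ⊗ₜ (1 : K)) = Coalgebra.counit (R := R) x • (1 : K)
  /-- `act` is comultiplicative -/
  comul_act : Coalgebra.comul ∘ₗ act
      = TensorProduct.map act act ∘ₗ (Coalgebra.comul (R := R) (A := H ⊗[R] K))
  /-- `act` is counital -/
  counit_act : Coalgebra.counit ∘ₗ act = (Coalgebra.counit (R := R) (A := H ⊗[R] K))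

/-- `T : K → H` is a coalgebra homomorphism. -/
structure IsCoalgHom (T : K →ₗ[R] H) : Prop where
  comul_comp : Coalgebra.comul ∘ₗ T = TensorProduct.map T T ∘ₗ Coalgebra.comul
  counit_comp : Coalgebra.counit ∘ₗ T = (Coalgebra.counit (R := R) (A := K))

/-- The descendent product `a *_T b = a₁·(T(a₂) ⇀ b)` as a linear map. -/
noncomputable def descProd (act : H ⊗[R] K →ₗ[R] K) (T : K →ₗ[R] H) :
    K ⊗[R] K →ₗ[R] K :=
  LinearMap.mul' R K
    ∘ₗ TensorProduct.map LinearMap.id (act ∘ₗ TensorProduct.map T LinearMap.id)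
    ∘ₗ (TensorProduct.assoc R K K K).toLinearMap
    ∘ₗ TensorProduct.map Coalgebra.comul LinearMap.id

/-- The relative Rota–Baxter identity `T(a)·T(b) = T(a₁·(T(a₂) ⇀ b))`. -/
def IsRelRotaBaxter (act : H ⊗[R] K →ₗ[R] K) (T : K →ₗ[R] H) : Prop :=
  ∀ a b : K, T a * T b = T (descProd R H K act T (a ⊗ₜ b))

/-- `S_T(a) = S_H(T(a₁)) ⇀ S_K(a₂)`. -/
noncomputable def descAntipode (act : H ⊗[R] K →ₗ[R] K) (T : K →ₗ[R] H) :
    K →ₗ[R] K :=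
  act ∘ₗ TensorProduct.map ((HopfAlgebra.antipode (R := R) (A := H)) ∘ₗ T)
          (HopfAlgebra.antipode (R := R) (A := K))
    ∘ₗ Coalgebra.comul

/-- An element of a coalgebra-with-unit is primitive if
`Δ(x) = 1 ⊗ x + x ⊗ 1`. -/
def IsPrimitive (A : Type*) [Ring A] [HopfAlgebra R A] (x : A) : Prop :=
  Coalgebra.comul (R := R) x = (1 : A) ⊗ₜ x + x ⊗ₜ (1 : A)


section Aux

variable {R H K : Type*} [CommRing R] [Ring H] [HopfAlgebra R H]
  [Ring K] [HopfAlgebra R K]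

/-- `T` maps `1` to `1`. -/
theorem T_one (act : H ⊗[R] K →ₗ[R] K) (T : K →ₗ[R] H)
    (hmb : IsModuleBialgebra R H K act) (hT : IsCoalgHom R H K T)
    (hrb : IsRelRotaBaxter R H K act T) : T 1 = 1 := by
  have hcomul : Coalgebra.comul (T 1) = T 1 ⊗ₜ[R] T 1 := by
    have := LinearMap.congr_fun hT.comul_comp 1
    simpa [Algebra.TensorProduct.one_def] using this
  have hcounit : Coalgebra.counit (R := R) (T 1) = 1 := by
    have := LinearMap.congr_fun hT.counit_comp 1
    simpa using this
  -- `T 1` is idempotent by the Rota–Baxter identity at `1, 1`.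
  have hdesc : descProd R H K act T ((1 : K) ⊗ₜ 1) = 1 := by
    simp [descProd, Algebra.TensorProduct.one_def, hmb.act_one, hcounit]
  have hidem : T 1 * T 1 = T 1 := by
    have := hrb 1 1
    rwa [hdesc] at this
  -- `T 1` is grouplike, hence left-invertible via the antipode.
  have hinv : HopfAlgebra.antipode (R := R) (A := H) (T 1) * T 1 = 1 := by
    have := HopfAlgebra.mul_antipode_rTensor_comul_apply (R := R) (T 1)
    rw [hcomul] at this
    simpa [hcounit] using this
  calc T 1 = (HopfAlgebra.antipode (R := R) (A := H) (T 1) * T 1) * T 1 := by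
        rw [hinv, one_mul]
    _ = HopfAlgebra.antipode (R := R) (A := H) (T 1) * (T 1 * T 1) := by
        rw [mul_assoc]
    _ = 1 := by rw [hidem, hinv]

/-- The descendent product on a primitive first argument. -/
theorem descProd_primitive (act : H ⊗[R] K →ₗ[R] K) (T : K →ₗ[R] H)
    (hmb : IsModuleBialgebra R H K act) (hT : IsCoalgHom R H K T)
    (hrb : IsRelRotaBaxter R H K act T) (a b : K) (ha : IsPrimitive R K a) :
    descProd R H K act T (a ⊗ₜ b) = act (T a ⊗ₜ b) + a * b := by
  have h1 : T 1 = 1 := T_one act T hmb hT hrb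
  rw [IsPrimitive] at ha
  simp [descProd, ha, tmul_add, add_tmul, h1, hmb.one_act]

end Aux

/-- A relative Rota–Baxter operator `T : K → H` with respect to a
cocommutative left `H`-module bialgebra restricts to a map
`P(K) → P(H)` on primitive elements which is a relative Rota–Baxter operator
of weight 1 on the Lie algebra `P(H)`:
`[T(a), T(b)] = T(T(a) ⇀ b − T(b) ⇀ a + [a,b])`. -/
theorem relRotaBaxter_restrict_primitives (act : H ⊗[R] K →ₗ[R] K)
    (T : K →ₗ[R] H) (hmb : IsModuleBialgebra R H K act)
    (hT : IsCoalgHom R H K T) (hrb : IsRelRotaBaxter R H K act T)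
    (hco : _root_.IsCocomm R K) :
    (∀ a : K, IsPrimitive R K a → IsPrimitive R H (T a)) ∧
    (∀ a b : K, IsPrimitive R K a → IsPrimitive R K b →
      T a * T b - T b * T a
        = T (act (T a ⊗ₜ b) - act (T b ⊗ₜ a) + (a * b - b * a))) := by
  have h1 : T 1 = 1 := T_one act T hmb hT hrb
  constructor
  · intro a ha
    rw [IsPrimitive] at ha ⊢
    have := LinearMap.congr_fun hT.comul_comp a
    simp only [LinearMap.coe_comp, Function.comp_apply, ha, map_add,
      TensorProduct.map_tmul, h1] at this
    exact this
  · intro a b ha hb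
    have hab := hrb a b
    have hba := hrb b a
    rw [descProd_primitive act T hmb hT hrb a b ha] at hab
    rw [descProd_primitive act T hmb hT hrb b a hb] at hba
    rw [hab, hba, ← map_sub]
    congr 1
    abel
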